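/- Define the unitary W : ℓ²(ℕ) ⊗ ℓ²(ℕ) → ⊕_{n=1}^∞ ℂⁿ by W(e_k ⊗ e_i) = e_{i+k−1, i}, where {e_{n,1},...,e_{n,n}} is the standard basis of ℂⁿ. Then W*VW = S ⊗ S*, where V = ⊕ₙ Vₙ with Vₙ the upper shift matrix on ℂⁿ and S the unilateral shift on ℓ²(ℕ). -/

import Mathlib

set_option synthInstance.maxHeartbeats 1000000
set_option maxHeartbeats 1000000

private lemma single_block_apply (m n : ℕ) (v : EuclideanSpace ℂ (Fin (m + 1)))
    (j : Fin (n + 1)) :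
    (lp.single (E := fun n : ℕ => EuclideanSpace ℂ (Fin (n + 1))) 2 m v) n j
      = if h : n = m then v ⟨(j : ℕ), h ▸ j.isLt⟩ else 0 := by
  by_cases h : n = m
  · subst h
    rw [dif_pos rfl, lp.single_apply_self]
  · rw [dif_neg h, lp.single_apply_ne 2 _ _ h]
    rfl

/-- Model `ℓ²(ℕ) ⊗ ℓ²(ℕ)` as `ℓ²(ℕ × ℕ)` (with `e_k ⊗ e_i ↦ e_{(k,i)}`, 0-based) and
`⊕ₙ ℂⁿ` as the `ℓ²`-direct sum of the `EuclideanSpace ℂ (Fin (n+1))`. Let `W` be the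
unitary determined by `W(e_k ⊗ e_i) = e_{i+k-1, i}` (0-based: `W e_{(k,i)}` is the
`i`-th basis vector of the block of dimension `k+i+1`), let `V = ⊕ₙ Vₙ` be the
blockwise upper shift, and let `T = S ⊗ S*`. Then `W*VW = S ⊗ S*`. -/
theorem stmt14
    (W : lp (fun _ : ℕ × ℕ => ℂ) 2 ≃ₗᵢ[ℂ]
      lp (fun n : ℕ => EuclideanSpace ℂ (Fin (n + 1))) 2)
    (hW : ∀ k i : ℕ, W (lp.single 2 (k, i) 1)
      = lp.single 2 (k + i)
          (EuclideanSpace.single (⟨i, by omega⟩ : Fin (k + i + 1)) 1))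
    (V : lp (fun n : ℕ => EuclideanSpace ℂ (Fin (n + 1))) 2 →L[ℂ]
      lp (fun n : ℕ => EuclideanSpace ℂ (Fin (n + 1))) 2)
    (hV : ∀ (x : lp (fun n : ℕ => EuclideanSpace ℂ (Fin (n + 1))) 2) (n : ℕ)
        (j : Fin (n + 1)),
      V x n j = if h : (j : ℕ) + 1 < n + 1 then x n ⟨(j : ℕ) + 1, h⟩ else 0)
    (T : lp (fun _ : ℕ × ℕ => ℂ) 2 →L[ℂ] lp (fun _ : ℕ × ℕ => ℂ) 2)
    (hT0 : ∀ (x : lp (fun _ : ℕ × ℕ => ℂ) 2) (i : ℕ), T x (0, i) = 0)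
    (hT : ∀ (x : lp (fun _ : ℕ × ℕ => ℂ) 2) (k i : ℕ),
      T x (k + 1, i) = x (k, i + 1)) :
    ∀ x : lp (fun _ : ℕ × ℕ => ℂ) 2, W.symm (V (W x)) = T x := by
  set Wc : lp (fun _ : ℕ × ℕ => ℂ) 2 →L[ℂ]
      lp (fun n : ℕ => EuclideanSpace ℂ (Fin (n + 1))) 2 :=
    W.toLinearIsometry.toContinuousLinearMap with hWc
  have hWcx : ∀ x, Wc x = W x := fun x => rfl
  have hT0' : ∀ k : ℕ, T (lp.single 2 (k, 0) (1:ℂ)) = 0 := by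
    intro k
    ext ⟨k', i'⟩
    rcases k' with _ | k'
    · simp [hT0]
    · rw [hT _ k' i']
      have : ((k', i'+1) : ℕ × ℕ) ≠ (k, 0) := by simp
      simp [lp.single_apply_ne _ _ _ this]
  have hT1 : ∀ k i : ℕ, T (lp.single 2 (k, i+1) (1:ℂ))
      = lp.single 2 (k+1, i) (1:ℂ) := by
    intro k i
    ext ⟨k', i'⟩
    rcases k' with _ | k'
    · rw [hT0]
      have : ((0, i') : ℕ × ℕ) ≠ (k+1, i) := by simp
      rw [lp.single_apply_ne _ _ _ this]
    · rw [hT _ k' i']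
      by_cases h : k' = k ∧ i' = i
      · obtain ⟨rfl, rfl⟩ := h
        rw [lp.single_apply_self, lp.single_apply_self]
      · have h1 : ((k', i'+1) : ℕ × ℕ) ≠ (k, i+1) := by
          simp only [Ne, Prod.mk.injEq, not_and] at h ⊢
          intro hk hi; exact h hk (by omega)
        have h2 : ((k'+1, i') : ℕ × ℕ) ≠ (k+1, i) := by
          simp only [Ne, Prod.mk.injEq, not_and] at h ⊢
          intro hk hi; exact h (by omega) hi
        rw [lp.single_apply_ne _ _ _ h1, lp.single_apply_ne _ _ _ h2]
  have key : ∀ k i : ℕ, V (W (lp.single 2 (k, i) (1:ℂ)))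
      = W (T (lp.single 2 (k, i) (1:ℂ))) := by
    intro k i
    rcases i with _ | i
    · rw [hT0' k, map_zero, hW k 0]
      ext n j
      rw [hV]
      split_ifs with h
      · rw [single_block_apply]
        split_ifs with hn
        · simp only [EuclideanSpace.single_apply, Fin.ext_iff, lp.coeFn_zero, Pi.zero_apply,
            PiLp.zero_apply]
          rw [if_neg (by omega)]
        · simp
      · simp
    · rw [hT1 k i, hW k (i+1), hW (k+1) i]
      ext n j
      rw [hV]
      split_ifs with h
      · rw [single_block_apply, single_block_apply]
        by_cases hn : n = k + (i+1)
        · rw [dif_pos hn, dif_pos (by omega)]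
          simp only [EuclideanSpace.single_apply, Fin.ext_iff]
          split_ifs <;> first | rfl | omega
        · rw [dif_neg hn, dif_neg (by omega)]
      · rw [single_block_apply]
        split_ifs with hn
        · simp only [EuclideanSpace.single_apply, Fin.ext_iff]
          rw [if_neg (by omega)]
        · rfl
  have keyc : ∀ (p : ℕ × ℕ) (c : ℂ),
      V (Wc (lp.single 2 p c)) = Wc (T (lp.single 2 p c)) := by
    rintro ⟨k, i⟩ c
    have : (lp.single 2 ((k, i) : ℕ × ℕ) c : lp (fun _ : ℕ × ℕ => ℂ) 2)
        = c • lp.single 2 (k, i) (1:ℂ) := by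
      rw [← lp.single_smul]
      norm_num
    rw [this, map_smul, map_smul, map_smul, map_smul, hWcx, hWcx, key]
  intro x
  have hx : HasSum (fun p : ℕ × ℕ => lp.single 2 p (x p)) x :=
    lp.hasSum_single (by norm_num) x
  have h1 : HasSum (fun p : ℕ × ℕ => V (Wc (lp.single 2 p (x p)))) (V (Wc x)) :=
    hx.mapL (V.comp Wc)
  have h2 : HasSum (fun p : ℕ × ℕ => Wc (T (lp.single 2 p (x p)))) (Wc (T x)) :=
    hx.mapL (Wc.comp T)
  have hfe : (fun p : ℕ × ℕ => V (Wc (lp.single 2 p (x p))))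
      = fun p : ℕ × ℕ => Wc (T (lp.single 2 p (x p))) :=
    funext fun p => keyc p (x p)
  rw [hfe] at h1
  have h3 : V (Wc x) = Wc (T x) := h1.unique h2
  rw [hWcx, hWcx] at h3
  rw [h3]
  exact W.symm_apply_apply _
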